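/- arXiv:1001.0058 — 3 statements merged into one kernel-verified Lean document; each statement's English description precedes it below -/
import Mathlib

section
/- Let L(s) and C(s) be formal power series with constant term 1 over a commutative ring, related for each nonnegative integer k by the coefficient identity coming from C(s) = exp(∑_{k≥1} −(q^k−1)^{−n} S(k) s^k / k) and L(s) = exp(∑_{k≥1} S(k) s^k / k). Then L(s) = ∏_{i=0}^{n} C(q^i s)^{(−1)^{n−i+1} binom(n,i)}, i.e., expanding (q^k−1)^n = ∑_{i=0}^n binom(n,i) (−1)^{n−i} q^{ik} yields this product formula of formal power series. -/
open PowerSeries Finset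

section LogRelAux

variable {R : Type*} [CommRing R]

/-- The power series of recurrence coefficients. -/
noncomputable def Arec (a : ℕ → R) : PowerSeries R :=
  PowerSeries.mk fun m => if m = 0 then 0 else a m

/-- `f` satisfies the logarithmic-derivative relation with coefficients `a`. -/
def LogRel (a : ℕ → R) (f : PowerSeries R) : Prop :=
  X * (d⁄dX R f) = Arec a * f

theorem Arec_add (a b : ℕ → R) : Arec (fun m => a m + b m) = Arec a + Arec b := by
  ext k
  simp only [Arec, coeff_mk, map_add]
  split_ifs <;> simp

theorem Arec_neg (a : ℕ → R) : Arec (fun m => -a m) = -Arec a := by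
  ext k
  simp only [Arec, coeff_mk, map_neg]
  split_ifs <;> simp

theorem Arec_zero : Arec (fun _ => (0 : R)) = 0 := by
  ext k
  simp [Arec, coeff_mk]

theorem coeff_Arec_mul (a : ℕ → R) (f : PowerSeries R) (k : ℕ) :
    coeff k (Arec a * f) = ∑ m ∈ Icc 1 k, a m * coeff (k - m) f := by
  rw [coeff_mul, Nat.sum_antidiagonal_eq_sum_range_succ
    (fun i j => coeff i (Arec a) * coeff j f) k]
  rw [← Finset.sum_subset (s₁ := Icc 1 k)
      (fun x hx => mem_range.2 (by simp only [mem_Icc] at hx; omega))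
      (fun x hx hx' => by
        have hx0 : x = 0 := by
          simp only [mem_range] at hx
          simp only [mem_Icc] at hx'
          omega
        simp [hx0, Arec, coeff_mk])]
  apply Finset.sum_congr rfl
  intro m hm
  simp only [mem_Icc] at hm
  simp [Arec, coeff_mk, Nat.one_le_iff_ne_zero.mp hm.1]

theorem logRel_iff (a : ℕ → R) (f : PowerSeries R) :
    LogRel a f ↔ ∀ k : ℕ, 1 ≤ k →
      (k : R) * coeff k f = ∑ m ∈ Icc 1 k, a m * coeff (k - m) f := by
  constructor
  · intro h k hk
    obtain ⟨j, rfl⟩ : ∃ j, k = j + 1 := ⟨k - 1, by omega⟩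
    have h2 := congrArg (coeff (j + 1)) h
    rw [coeff_succ_X_mul, coeff_derivative, coeff_Arec_mul] at h2
    push_cast
    linear_combination h2
  · intro h
    ext k
    cases k with
    | zero => rw [coeff_zero_X_mul, coeff_Arec_mul]; simp
    | succ j =>
      rw [coeff_succ_X_mul, coeff_derivative, coeff_Arec_mul]
      have h2 := h (j + 1) (by omega)
      push_cast at h2 ⊢
      linear_combination h2

theorem LogRel.mul {a b : ℕ → R} {f g : PowerSeries R}
    (hf : LogRel a f) (hg : LogRel b g) :
    LogRel (fun m => a m + b m) (f * g) := by
  unfold LogRel at *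
  rw [Arec_add, Derivation.leibniz, smul_eq_mul, smul_eq_mul]
  calc X * (f * d⁄dX R g + g * d⁄dX R f)
      = f * (X * d⁄dX R g) + g * (X * d⁄dX R f) := by ring
    _ = f * (Arec b * g) + g * (Arec a * f) := by rw [hf, hg]
    _ = (Arec a + Arec b) * (f * g) := by ring

theorem LogRel.one : LogRel (fun _ => (0 : R)) 1 := by
  unfold LogRel
  rw [Arec_zero]
  simp

theorem LogRel.unitsInv {a : ℕ → R} {u : (PowerSeries R)ˣ} (h : LogRel a ↑u) :
    LogRel (fun m => -a m) ↑u⁻¹ := by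
  unfold LogRel at *
  rw [Arec_neg]
  set x : PowerSeries R := ↑u with hx
  set y : PowerSeries R := ↑u⁻¹ with hy
  have hxy : x * y = 1 := u.mul_inv
  have h2 : x * d⁄dX R y + y * d⁄dX R x = 0 := by
    have h2' := congrArg (d⁄dX R) hxy
    rwa [Derivation.leibniz, Derivation.map_one_eq_zero, smul_eq_mul, smul_eq_mul] at h2'
  have h4 : x * d⁄dX R y = -(y * d⁄dX R x) := eq_neg_of_add_eq_zero_left h2
  calc X * d⁄dX R y = (x * y) * (X * d⁄dX R y) := by rw [hxy, one_mul]
    _ = y * (X * (x * d⁄dX R y)) := by ring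
    _ = y * (X * (-(y * d⁄dX R x))) := by rw [h4]
    _ = -(y * y) * (X * d⁄dX R x) := by ring
    _ = -(y * y) * (Arec a * x) := by rw [h]
    _ = -Arec a * y * (x * y) := by ring
    _ = -Arec a * y := by rw [hxy, mul_one]

theorem LogRel.congr {a b : ℕ → R} {f : PowerSeries R} (h : LogRel a f)
    (hab : ∀ m, a m = b m) : LogRel b f := by
  have : a = b := funext hab
  rwa [← this]

theorem LogRel.npow {a : ℕ → R} {f : PowerSeries R} (h : LogRel a f) (m : ℕ) :
    LogRel (fun k => (m : R) * a k) (f ^ m) := by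
  induction m with
  | zero => exact LogRel.one.congr (by intro k; simp)
  | succ i ih =>
    have := ih.mul h
    rw [pow_succ]
    exact this.congr (by intro k; push_cast; ring)

theorem LogRel.zpow {a : ℕ → R} {u : (PowerSeries R)ˣ} (h : LogRel a ↑u) (z : ℤ) :
    LogRel (fun k => (z : R) * a k) ↑(u ^ z) := by
  cases z with
  | ofNat m =>
    rw [Int.ofNat_eq_coe, zpow_natCast]
    rw [Units.val_pow_eq_pow_val]
    exact (h.npow m).congr (by intro k; push_cast; ring)
  | negSucc m =>
    rw [zpow_negSucc]
    have h1 : LogRel (fun k => ((m + 1 : ℕ) : R) * a k) ↑(u ^ (m + 1)) := by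
      rw [Units.val_pow_eq_pow_val]; exact h.npow (m + 1)
    exact (h1.unitsInv).congr (by intro k; rw [Int.cast_negSucc]; push_cast; ring)

theorem LogRel.prodUnits {ι : Type*} (s : Finset ι) (w : ι → (PowerSeries R)ˣ)
    (a : ι → ℕ → R) (h : ∀ i ∈ s, LogRel (a i) ↑(w i)) :
    LogRel (fun k => ∑ i ∈ s, a i k) ↑(∏ i ∈ s, w i) := by
  induction s using Finset.cons_induction with
  | empty => exact LogRel.one.congr (by intro k; simp)
  | cons j t hj ih =>
    rw [Finset.prod_cons]
    have h1 := h j (Finset.mem_cons_self j t)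
    have h2 := ih fun i hi => h i (Finset.mem_cons_of_mem hi)
    rw [Units.val_mul]
    exact (h1.mul h2).congr (by intro k; rw [Finset.sum_cons])

theorem LogRel.rescale_self {a : ℕ → R} {f : PowerSeries R} (h : LogRel a f) (c : R) :
    LogRel (fun k => c ^ k * a k) (rescale c f) := by
  unfold LogRel at *
  have key1 : X * d⁄dX R (rescale c f) = rescale c (X * d⁄dX R f) := by
    ext k
    cases k with
    | zero => simp [coeff_rescale, coeff_zero_X_mul]
    | succ j =>
      rw [coeff_succ_X_mul, coeff_derivative, coeff_rescale, coeff_rescale,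
        coeff_succ_X_mul, coeff_derivative]
      ring
  have key2 : rescale c (Arec a) = Arec (fun k => c ^ k * a k) := by
    ext k
    simp only [Arec, coeff_rescale, coeff_mk]
    split_ifs <;> simp
  rw [key1, h, map_mul, key2]

theorem eq_of_rec {R : Type*} [CommRing R] [Algebra ℚ R] (a : ℕ → R)
    (f g : PowerSeries R) (h0 : constantCoeff f = constantCoeff g)
    (hf : ∀ k : ℕ, 1 ≤ k →
      (k : R) * coeff k f = ∑ m ∈ Icc 1 k, a m * coeff (k - m) f)
    (hg : ∀ k : ℕ, 1 ≤ k →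
      (k : R) * coeff k g = ∑ m ∈ Icc 1 k, a m * coeff (k - m) g) :
    f = g := by
  ext k
  induction k using Nat.strong_induction_on with
  | _ k ih =>
    match k with
    | 0 => simpa [coeff_zero_eq_constantCoeff] using h0
    | (j + 1) =>
      have hk : 1 ≤ j + 1 := by omega
      have hu : IsUnit (((j + 1 : ℕ) : R)) := by
        rw [← map_natCast (algebraMap ℚ R) (j + 1)]
        exact IsUnit.map _ (isUnit_iff_ne_zero.mpr (by exact_mod_cast Nat.succ_ne_zero j))
      apply hu.mul_left_cancel
      rw [hf _ hk, hg _ hk]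
      apply Finset.sum_congr rfl
      intro m hm
      simp only [mem_Icc] at hm
      rw [ih (j + 1 - m) (by omega)]

end LogRelAux

/-- Let `R` be a commutative ℚ-algebra, `q ∈ R`, `n ≥ 1`, and `S : ℕ → R` a
sequence with each `q^k - 1` invertible (with inverse `v k`).  Let
`L = exp(∑_{k≥1} S k s^k / k)` and `C = exp(∑_{k≥1} -(q^k-1)^{-n} S k s^k / k)`,
encoded by the coefficient recurrences obtained by logarithmic differentiation.
Then `L(s) = ∏_{i=0}^{n} C(q^i s)^{(-1)^{n-i+1} binom(n,i)}`. -/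
theorem L_eq_prod_C {R : Type*} [CommRing R] [Algebra ℚ R]
    (q : R) (n : ℕ) (hn : 1 ≤ n) (S : ℕ → R) (v : ℕ → R)
    (hv : ∀ k : ℕ, 1 ≤ k → v k * (q ^ k - 1) = 1)
    (L C : PowerSeries R)
    (hL0 : constantCoeff L = 1) (hC0 : constantCoeff C = 1)
    (hL : ∀ k : ℕ, 1 ≤ k →
      (k : R) * coeff k L = ∑ m ∈ Icc 1 k, S m * coeff (k - m) L)
    (hC : ∀ k : ℕ, 1 ≤ k →
      (k : R) * coeff k C = ∑ m ∈ Icc 1 k, (-(v m) ^ n * S m) * coeff (k - m) C)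
    (uC : (PowerSeries R)ˣ) (huC : (uC : PowerSeries R) = C) :
    L = ↑(∏ i ∈ range (n + 1),
        (Units.map (rescale (q ^ i)).toMonoidHom uC) ^
          ((-1 : ℤ) ^ (n - i + 1) * (n.choose i : ℤ))) := by
  set aC : ℕ → R := fun m => -(v m) ^ n * S m with haC
  set z : ℕ → ℤ := fun i => (-1 : ℤ) ^ (n - i + 1) * (n.choose i : ℤ) with hz
  set w : ℕ → (PowerSeries R)ˣ :=
    fun i => (Units.map (rescale (q ^ i)).toMonoidHom uC) ^ (z i) with hw
  set U : (PowerSeries R)ˣ := ∏ i ∈ range (n + 1), w i with hU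
  -- the recurrence for C, as a LogRel
  have hCrel : LogRel aC C := (logRel_iff aC C).2 hC
  -- LogRel for each factor
  have hwrel : ∀ i ∈ range (n + 1),
      LogRel (fun m => (z i : R) * ((q ^ i) ^ m * aC m)) ↑(w i) := by
    intro i _
    have hb : (↑(Units.map (rescale (q ^ i)).toMonoidHom uC) : PowerSeries R)
        = rescale (q ^ i) C := by
      rw [Units.coe_map, huC]; rfl
    have hres : LogRel (fun m => (q ^ i) ^ m * aC m)
        ↑(Units.map (rescale (q ^ i)).toMonoidHom uC) := by
      rw [hb]; exact hCrel.rescale_self (q ^ i)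
    exact hres.zpow (z i)
  have hUrel : LogRel (fun m => ∑ i ∈ range (n + 1),
      (z i : R) * ((q ^ i) ^ m * aC m)) ↑U :=
    LogRel.prodUnits (range (n + 1)) w _ hwrel
  -- the total coefficient simplifies to S m for m ≥ 1
  have hkey : ∀ m : ℕ, 1 ≤ m →
      (∑ i ∈ range (n + 1), (z i : R) * ((q ^ i) ^ m * aC m)) = S m := by
    intro m hm
    have hbin : (q ^ m - 1) ^ n
        = ∑ i ∈ range (n + 1), (-1 : R) ^ (i + n) * (q ^ m) ^ i * (n.choose i : R) := by
      rw [sub_pow]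
      exact Finset.sum_congr rfl fun i _ => by rw [one_pow, mul_one]
    have step : (∑ i ∈ range (n + 1), (z i : R) * ((q ^ i) ^ m * aC m))
        = (q ^ m - 1) ^ n * ((v m) ^ n * S m) := by
      rw [hbin, Finset.sum_mul]
      apply Finset.sum_congr rfl
      intro i hi
      rw [mem_range] at hi
      have hparity : (-1 : R) ^ (i + n) = (-1 : R) ^ (n - i) := by
        rw [show i + n = (n - i) + 2 * i by omega, pow_add, pow_mul]
        simp
      have hpow : (q ^ i) ^ m = (q ^ m) ^ i := by
        rw [← pow_mul, ← pow_mul, Nat.mul_comm]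
      simp only [hz, haC]
      push_cast
      rw [hpow, hparity, pow_succ]
      ring
    rw [step]
    have h1 := hv m hm
    calc (q ^ m - 1) ^ n * ((v m) ^ n * S m)
        = (v m * (q ^ m - 1)) ^ n * S m := by rw [mul_pow]; ring
      _ = 1 ^ n * S m := by rw [h1]
      _ = S m := by rw [one_pow, one_mul]
  -- the recurrence for U
  have hUrec : ∀ k : ℕ, 1 ≤ k →
      (k : R) * coeff k ↑U = ∑ m ∈ Icc 1 k, S m * coeff (k - m) ↑U := by
    intro k hk
    have := ((logRel_iff _ _).1 hUrel) k hk
    rw [this]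
    apply Finset.sum_congr rfl
    intro m hm
    simp only [mem_Icc] at hm
    rw [hkey m hm.1]
  -- constant coefficient of U is 1
  have hU0 : constantCoeff (↑U : PowerSeries R) = 1 := by
    have hone : ∀ i ∈ range (n + 1),
        Units.map (constantCoeff).toMonoidHom (w i) = 1 := by
      intro i _
      rw [hw]
      simp only
      rw [map_zpow]
      have hb : Units.map (constantCoeff).toMonoidHom
          (Units.map (rescale (q ^ i)).toMonoidHom uC) = 1 := by
        apply Units.ext
        simp only [Units.coe_map, Units.val_one, MonoidHom.coe_coe]
        show constantCoeff ((rescale (q ^ i)).toMonoidHom ↑uC) = 1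
        have : (rescale (q ^ i)).toMonoidHom (↑uC : PowerSeries R)
            = rescale (q ^ i) C := by rw [huC]; rfl
        rw [this, ← coeff_zero_eq_constantCoeff_apply, coeff_rescale, pow_zero, one_mul,
          coeff_zero_eq_constantCoeff_apply, hC0]
      rw [hb, one_zpow]
    calc constantCoeff (↑U : PowerSeries R)
        = ↑(Units.map (constantCoeff).toMonoidHom U) := by
          rw [Units.coe_map]; rfl
      _ = ↑(∏ i ∈ range (n + 1), Units.map (constantCoeff).toMonoidHom (w i)) := by
          rw [hU, map_prod]
      _ = 1 := by rw [Finset.prod_congr rfl hone]; simp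
  exact eq_of_rec S L ↑U (by rw [hL0, hU0]) hL hUrec
end

section
/- With L and C as in the previous context and assuming in addition that the infinite product converges coefficientwise (q topologically nilpotent), C(s) = ∏_{j=0}^{∞} L(q^j s)^{(−1)^{n−1} binom(n+j−1, j)}, i.e., the identity (q^k − 1)^{−n} = (−1)^n ∑_{j≥0} binom(n+j−1,j) q^{jk} of formal expansions yields this infinite product formula. -/
open PowerSeries Finset

section Aux

variable {R : Type*} [CommRing R]

/-- The logarithmic-derivative recurrence: `X F' = T F`. -/
private def LogRec (T F : PowerSeries R) : Prop := X * (d⁄dX R F) = T * F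

private lemma logRec_one : LogRec (0 : PowerSeries R) 1 := by
  unfold LogRec
  rw [Derivation.map_one_eq_zero, mul_zero, zero_mul]

private lemma logRec_mul {T U F G : PowerSeries R} (hF : LogRec T F) (hG : LogRec U G) :
    LogRec (T + U) (F * G) := by
  unfold LogRec at *
  rw [Derivation.leibniz, smul_eq_mul, smul_eq_mul, mul_add]
  calc X * (F * d⁄dX R G) + X * (G * d⁄dX R F)
      = F * (X * d⁄dX R G) + G * (X * d⁄dX R F) := by ring
    _ = F * (U * G) + G * (T * F) := by rw [hF, hG]
    _ = (T + U) * (F * G) := by ring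

private lemma logRec_inv {T : PowerSeries R} {w : (PowerSeries R)ˣ} (h : LogRec T ↑w) :
    LogRec (-T) ↑w⁻¹ := by
  unfold LogRec at *
  rw [derivative_inv]
  calc X * (-(↑w⁻¹ : PowerSeries R) ^ 2 * d⁄dX R ↑w)
      = -(↑w⁻¹ : PowerSeries R) ^ 2 * (X * d⁄dX R ↑w) := by ring
    _ = -(↑w⁻¹ : PowerSeries R) ^ 2 * (T * ↑w) := by rw [h]
    _ = -T * ↑w⁻¹ * ((↑w⁻¹ : PowerSeries R) * ↑w) := by ring
    _ = -T * ↑w⁻¹ := by rw [Units.inv_mul, mul_one]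

private lemma logRec_pow {T : PowerSeries R} {w : (PowerSeries R)ˣ} (h : LogRec T ↑w) (k : ℕ) :
    LogRec ((k : ℤ) • T) ↑(w ^ k) := by
  induction k with
  | zero => simpa using logRec_one
  | succ k ih =>
    have h2 := logRec_mul ih h
    have e1 : ((k + 1 : ℕ) : ℤ) • T = (k : ℤ) • T + T := by
      push_cast; rw [add_smul, one_smul]
    have e2 : (↑(w ^ (k + 1)) : PowerSeries R) = ↑(w ^ k) * ↑w := by
      rw [pow_succ, Units.val_mul]
    rw [e1, e2]; exact h2

private lemma logRec_zpow {T : PowerSeries R} {w : (PowerSeries R)ˣ} (h : LogRec T ↑w) (z : ℤ) :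
    LogRec (z • T) ↑(w ^ z) := by
  cases z with
  | ofNat k =>
    rw [Int.ofNat_eq_natCast, zpow_natCast]
    exact logRec_pow h k
  | negSucc k =>
    rw [zpow_negSucc]
    have h2 := logRec_inv (logRec_pow h (k + 1))
    have e1 : (Int.negSucc k) • T = -(((k + 1 : ℕ) : ℤ) • T) := by
      rw [← neg_smul]
      norm_num [Int.negSucc_eq]
    rw [e1]
    exact h2

private lemma logRec_prod {ι : Type*} (s : Finset ι) (T : ι → PowerSeries R)
    (w : ι → (PowerSeries R)ˣ) (h : ∀ j ∈ s, LogRec (T j) ↑(w j)) :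
    LogRec (∑ j ∈ s, T j) ↑(∏ j ∈ s, w j) := by
  classical
  induction s using Finset.cons_induction with
  | empty => simpa using logRec_one
  | cons a s ha ih =>
    rw [Finset.prod_cons, Finset.sum_cons, Units.val_mul]
    exact logRec_mul (h a (Finset.mem_cons_self a s))
      (ih fun j hj => h j (Finset.mem_cons_of_mem hj))

private lemma coeff_X_mul_derivative (F : PowerSeries R) (k : ℕ) :
    coeff k (X * d⁄dX R F) = (k : R) * coeff k F := by
  cases k with
  | zero => simp
  | succ j => rw [coeff_succ_X_mul, coeff_derivative]; push_cast; ring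

private lemma logRec_iff (T F : PowerSeries R) :
    LogRec T F ↔ ∀ k : ℕ, (k : R) * coeff k F = coeff k (T * F) := by
  constructor
  · intro h k; rw [← coeff_X_mul_derivative, h]
  · intro h; ext k; rw [coeff_X_mul_derivative, h]

private lemma logRec_rescale {T F : PowerSeries R} (h : LogRec T F) (c : R) :
    LogRec (rescale c T) (rescale c F) := by
  rw [logRec_iff] at h ⊢
  intro k
  have hk := h k
  rw [coeff_mul, Finset.Nat.sum_antidiagonal_eq_sum_range_succ_mk] at hk ⊢
  rw [coeff_rescale]
  calc (k : R) * (c ^ k * coeff k F) = c ^ k * ((k : R) * coeff k F) := by ring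
    _ = c ^ k * ∑ i ∈ range (k + 1), coeff i T * coeff (k - i) F := by rw [hk]
    _ = ∑ i ∈ range (k + 1), coeff i (rescale c T) * coeff (k - i) (rescale c F) := by
        rw [Finset.mul_sum]
        refine Finset.sum_congr rfl fun i hi => ?_
        rw [Finset.mem_range] at hi
        rw [coeff_rescale, coeff_rescale, mul_mul_mul_comm, ← pow_add,
          show i + (k - i) = k from by omega]

private lemma coeff_mul_eq_Icc {T F : PowerSeries R} (hT : coeff 0 T = 0) (k : ℕ) :
    coeff k (T * F) = ∑ m ∈ Icc 1 k, coeff m T * coeff (k - m) F := by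
  rw [coeff_mul, Finset.Nat.sum_antidiagonal_eq_sum_range_succ_mk]
  symm
  apply Finset.sum_subset
  · intro m hm
    rw [Finset.mem_Icc] at hm
    rw [Finset.mem_range]
    omega
  · intro m hm hnot
    rw [Finset.mem_range] at hm
    rw [Finset.mem_Icc] at hnot
    have : m = 0 := by omega
    rw [this, hT, zero_mul]

private lemma logRec_iff_Icc {T F : PowerSeries R} (hT : coeff 0 T = 0) :
    LogRec T F ↔ ∀ k : ℕ, 1 ≤ k →
      (k : R) * coeff k F = ∑ m ∈ Icc 1 k, coeff m T * coeff (k - m) F := by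
  rw [logRec_iff]
  constructor
  · intro h k _; rw [h k, coeff_mul_eq_Icc hT]
  · intro h k
    rcases Nat.eq_zero_or_pos k with rfl | hk
    · rw [coeff_mul_eq_Icc hT]
      simp
    · rw [coeff_mul_eq_Icc hT]; exact h k hk

private lemma constCoeff_unit_zpow {u : (PowerSeries R)ˣ}
    (h : constantCoeff (↑u : PowerSeries R) = 1) (z : ℤ) :
    constantCoeff (↑(u ^ z) : PowerSeries R) = 1 := by
  have h1 : Units.map (constantCoeff (R := R)).toMonoidHom u = 1 :=
    Units.val_eq_one.mp (by rw [Units.coe_map]; exact h)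
  have h2 : Units.map (constantCoeff (R := R)).toMonoidHom (u ^ z) = 1 := by
    rw [map_zpow, h1, one_zpow]
  have h3 := congrArg Units.val h2
  rw [Units.coe_map] at h3
  simpa using h3

private lemma key_binom (n N : ℕ) (hn : 1 ≤ n) (x : R) :
    ∃ r : R, (1 - x) ^ n * (∑ j ∈ range N, ((n + j - 1).choose j : R) * x ^ j)
      = 1 + x ^ N * r := by
  classical
  rcases Nat.eq_zero_or_pos N with rfl | hN
  · exact ⟨-1, by simp⟩
  set g : PowerSeries R := (invOneSubPow R n).val with hg
  have hmul : ((1 - X) ^ n : PowerSeries R) * g = 1 := by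
    rw [hg, ← invOneSubPow_inv_eq_one_sub_pow]
    exact (invOneSubPow R n).inv_val
  have hcoe : ∀ j, coeff j g = ((n + j - 1).choose j : R) := by
    intro j
    rw [hg, invOneSubPow_val_eq_mk_sub_one_add_choose_of_pos R n (by omega), coeff_mk]
    have h2 : (n - 1 + j).choose (n - 1) = (n - 1 + j).choose j := by
      have h3 := Nat.choose_symm (Nat.le_add_left j (n - 1))
      rwa [Nat.add_sub_cancel] at h3
    rw [h2, show n - 1 + j = n + j - 1 from by omega]
  set p1 : Polynomial R := (1 - Polynomial.X) ^ n with hp1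
  set p2 : Polynomial R := trunc N g with hp2
  have hp1c : ((p1 : Polynomial R) : PowerSeries R) = ((1 - X) ^ n : PowerSeries R) := by
    rw [hp1, Polynomial.coe_pow, Polynomial.coe_sub, Polynomial.coe_one, Polynomial.coe_X]
  have hcoeP : ∀ d, d < N → (p1 * p2).coeff d = (1 : Polynomial R).coeff d := by
    intro d hd
    have e2 : coeff d (((1 - X) ^ n : PowerSeries R) * (↑p2 : PowerSeries R))
        = coeff d (((1 - X) ^ n : PowerSeries R) * g) := by
      rw [coeff_mul, coeff_mul]
      refine Finset.sum_congr rfl fun ij hij => ?_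
      rw [Finset.HasAntidiagonal.mem_antidiagonal] at hij
      congr 1
      rw [Polynomial.coeff_coe, hp2, coeff_trunc, if_pos (by omega)]
    calc (p1 * p2).coeff d = coeff d ((↑(p1 * p2) : PowerSeries R)) :=
          (Polynomial.coeff_coe _ d).symm
      _ = coeff d (((1 - X) ^ n : PowerSeries R) * ↑p2) := by rw [Polynomial.coe_mul, hp1c]
      _ = coeff d (((1 - X) ^ n : PowerSeries R) * g) := e2
      _ = coeff d (1 : PowerSeries R) := by rw [hmul]
      _ = (1 : Polynomial R).coeff d := by
          rw [PowerSeries.coeff_one, Polynomial.coeff_one]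
  have hdvd : (Polynomial.X : Polynomial R) ^ N ∣ p1 * p2 - 1 := by
    rw [Polynomial.X_pow_dvd_iff]
    intro d hd
    rw [Polynomial.coeff_sub, hcoeP d hd, sub_self]
  obtain ⟨h, hh⟩ := hdvd
  refine ⟨h.eval x, ?_⟩
  have hpe : p1.eval x * p2.eval x = 1 + x ^ N * h.eval x := by
    have e1 : p1 * p2 = 1 + Polynomial.X ^ N * h := by linear_combination hh
    calc p1.eval x * p2.eval x = (p1 * p2).eval x := (Polynomial.eval_mul).symm
      _ = (1 + Polynomial.X ^ N * h).eval x := by rw [e1]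
      _ = 1 + x ^ N * h.eval x := by simp
  have hep1 : p1.eval x = (1 - x) ^ n := by simp [hp1]
  have hep2 : p2.eval x = ∑ j ∈ range N, ((n + j - 1).choose j : R) * x ^ j := by
    rw [hp2]
    rw [PowerSeries.trunc_apply]
    rw [Polynomial.eval_finset_sum]
    refine Finset.sum_congr (by rw [Nat.Ico_zero_eq_range]) fun j hj => ?_
    rw [Polynomial.eval_monomial, hcoe j]
  rw [← hep1, ← hep2, hpe]

end Aux

/-- Let `R` be a commutative ℚ-algebra, complete with respect to an ideal `I`,
`q ∈ I`, `n ≥ 1`, `S : ℕ → R` with each `q^k - 1` invertible.  With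
`L = exp(∑_{k≥1} S k s^k/k)` and `C = exp(∑_{k≥1} -(q^k-1)^{-n} S k s^k/k)`
(encoded by the coefficient recurrences from logarithmic differentiation),
the infinite product `∏_{j≥0} L(q^j s)^{(-1)^{n-1} binom(n+j-1,j)}` converges
coefficientwise `I`-adically to `C`. -/
theorem C_eq_prod_L {R : Type*} [CommRing R] [Algebra ℚ R]
    (I : Ideal R) [IsAdicComplete I R]
    (q : R) (hq : q ∈ I) (n : ℕ) (hn : 1 ≤ n) (S : ℕ → R) (v : ℕ → R)
    (hv : ∀ k : ℕ, 1 ≤ k → v k * (q ^ k - 1) = 1)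
    (L C : PowerSeries R)
    (hL0 : constantCoeff L = 1) (hC0 : constantCoeff C = 1)
    (hL : ∀ k : ℕ, 1 ≤ k →
      (k : R) * coeff k L = ∑ m ∈ Icc 1 k, S m * coeff (k - m) L)
    (hC : ∀ k : ℕ, 1 ≤ k →
      (k : R) * coeff k C = ∑ m ∈ Icc 1 k, (-(v m) ^ n * S m) * coeff (k - m) C)
    (uL : (PowerSeries R)ˣ) (huL : (uL : PowerSeries R) = L) :
    ∀ d : ℕ, ∀ m : ℕ, ∃ N₀ : ℕ, ∀ N ≥ N₀,
      coeff d
        ((↑(∏ j ∈ range N,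
            (Units.map (rescale (q ^ j)).toMonoidHom uL) ^
              ((-1 : ℤ) ^ (n - 1) * ((n + j - 1).choose j : ℤ))) : PowerSeries R)
          - C) ∈ I ^ m := by
  classical
  -- weight power series for L and C
  set TL : PowerSeries R := PowerSeries.mk (fun m => if m = 0 then 0 else S m) with hTL
  set TC : PowerSeries R := PowerSeries.mk (fun m => if m = 0 then 0 else -(v m) ^ n * S m)
    with hTC
  have hTL0 : coeff 0 TL = 0 := by rw [hTL, coeff_mk, if_pos rfl]
  have hTC0 : coeff 0 TC = 0 := by rw [hTC, coeff_mk, if_pos rfl]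
  have hTLco : ∀ m, 1 ≤ m → coeff m TL = S m := by
    intro m hm; rw [hTL, coeff_mk, if_neg (by omega)]
  have hTCco : ∀ m, 1 ≤ m → coeff m TC = -(v m) ^ n * S m := by
    intro m hm; rw [hTC, coeff_mk, if_neg (by omega)]
  have hRecL : LogRec TL L := by
    rw [logRec_iff_Icc hTL0]
    intro k hk
    rw [hL k hk]
    refine Finset.sum_congr rfl fun m hm => ?_
    rw [Finset.mem_Icc] at hm
    rw [hTLco m hm.1]
  have hRecC : LogRec TC C := by
    rw [logRec_iff_Icc hTC0]
    intro k hk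
    rw [hC k hk]
    refine Finset.sum_congr rfl fun m hm => ?_
    rw [Finset.mem_Icc] at hm
    rw [hTCco m hm.1]
  -- key estimate for every N
  have key : ∀ N k : ℕ,
      coeff k
        ((↑(∏ j ∈ range N,
            (Units.map (rescale (q ^ j)).toMonoidHom uL) ^
              ((-1 : ℤ) ^ (n - 1) * ((n + j - 1).choose j : ℤ))) : PowerSeries R)
          - C) ∈ I ^ N := by
    intro N
    set U : ℕ → (PowerSeries R)ˣ := fun j => Units.map (rescale (q ^ j)).toMonoidHom uL
      with hU
    set W : ℕ → (PowerSeries R)ˣ := fun j =>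
      (Units.map (rescale (q ^ j)).toMonoidHom uL) ^
        ((-1 : ℤ) ^ (n - 1) * ((n + j - 1).choose j : ℤ)) with hW
    have hUcoe : ∀ j, (↑(U j) : PowerSeries R) = rescale (q ^ j) L := by
      intro j
      rw [hU, Units.coe_map, huL]
      rfl
    set TN : PowerSeries R := ∑ j ∈ range N,
      ((-1 : ℤ) ^ (n - 1) * ((n + j - 1).choose j : ℤ)) • rescale (q ^ j) TL with hTN
    have hRecP : LogRec TN (↑(∏ j ∈ range N, W j) : PowerSeries R) := by
      rw [hTN]
      refine logRec_prod (range N) _ _ fun j _ => ?_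
      rw [hW]
      refine logRec_zpow ?_ _
      rw [hUcoe j]
      exact logRec_rescale hRecL (q ^ j)
    have hTN0 : coeff 0 TN = 0 := by
      rw [hTN, map_sum]
      refine Finset.sum_eq_zero fun j _ => ?_
      rw [map_zsmul, coeff_rescale, hTL0, mul_zero, smul_zero]
    have hTNco : ∀ m, 1 ≤ m → coeff m TN =
        (∑ j ∈ range N, (((-1 : ℤ) ^ (n - 1) * ((n + j - 1).choose j : ℤ) : ℤ) : R)
          * (q ^ m) ^ j) * S m := by
      intro m hm
      rw [hTN, map_sum, Finset.sum_mul]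
      refine Finset.sum_congr rfl fun j _ => ?_
      rw [map_zsmul, zsmul_eq_mul, coeff_rescale, hTLco m hm,
        show (q ^ j) ^ m = (q ^ m) ^ j from by rw [← pow_mul, ← pow_mul, Nat.mul_comm]]
      ring
    -- the key coefficient difference lies in I^N
    have hdiff : ∀ m, 1 ≤ m → coeff m TN - coeff m TC ∈ I ^ N := by
      intro m hm
      rw [hTNco m hm, hTCco m hm]
      set x : R := q ^ m with hx
      have hxI : x ∈ I := by
        rw [hx, show q ^ m = q * q ^ (m - 1) from by
          rw [← pow_succ']; congr 1; omega]
        exact I.mul_mem_right _ hq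
      obtain ⟨r, hr⟩ := key_binom n N hn x
      set A : R := ∑ j ∈ range N, ((n + j - 1).choose j : R) * x ^ j with hA
      set c : R := (-1 : R) ^ (n - 1) with hc
      have hvx : v m * (1 - x) = -1 := by
        have h0 := hv m hm
        rw [← hx] at h0
        linear_combination -h0
      have h2 : (v m) ^ n * (1 - x) ^ n = (-1 : R) ^ n := by
        rw [← mul_pow, hvx]
      have h3 : c * (-1 : R) ^ n = -1 := by
        rw [hc, ← pow_add]
        exact Odd.neg_one_pow ⟨n - 1, by omega⟩
      have h4 : c * c = 1 := by
        rw [hc, ← pow_add]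
        exact Even.neg_one_pow ⟨n - 1, rfl⟩
      have h6 : ((-1 : R) ^ n) * A = (v m) ^ n * (1 + x ^ N * r) := by
        linear_combination (v m) ^ n * hr - A * h2
      have hfin : c * A + (v m) ^ n = (-(v m) ^ n * r) * x ^ N := by
        linear_combination (-c * c) * h6 + (c * A) * h3 + (-(v m) ^ n * (1 + x ^ N * r)) * h4
      have hsum : (∑ j ∈ range N, (((-1 : ℤ) ^ (n - 1) * ((n + j - 1).choose j : ℤ) : ℤ) : R)
          * (q ^ m) ^ j) = c * A := by
        rw [hA, hc, Finset.mul_sum]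
        refine Finset.sum_congr rfl fun j _ => ?_
        rw [← hx]
        push_cast
        ring
      rw [hsum]
      have hfin2 : c * A * S m - -(v m) ^ n * S m = ((-(v m) ^ n * r) * S m) * x ^ N := by
        linear_combination S m * hfin
      rw [hfin2]
      exact Ideal.mul_mem_left _ _ (Ideal.pow_mem_pow hxI N)
    -- constant coefficient of the partial product is 1
    have hP0 : constantCoeff (↑(∏ j ∈ range N, W j) : PowerSeries R) = 1 := by
      rw [show (↑(∏ j ∈ range N, W j) : PowerSeries R)
          = ∏ j ∈ range N, (↑(W j) : PowerSeries R) from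
        map_prod (Units.coeHom (PowerSeries R)) _ _, map_prod]
      refine Finset.prod_eq_one fun j _ => ?_
      rw [hW]
      refine constCoeff_unit_zpow ?_ _
      have := hUcoe j
      rw [hU] at this
      rw [this, ← coeff_zero_eq_constantCoeff_apply, coeff_rescale, pow_zero, one_mul,
        coeff_zero_eq_constantCoeff_apply, hL0]
    -- the recurrences for partial product and for C
    have hPk := (logRec_iff_Icc hTN0).mp hRecP
    have hCk := (logRec_iff_Icc hTC0).mp hRecC
    -- main induction on the coefficient index
    intro k
    induction k using Nat.strong_induction_on with
    | _ k ih =>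
      rcases Nat.eq_zero_or_pos k with rfl | hk
      · rw [map_sub, coeff_zero_eq_constantCoeff_apply, coeff_zero_eq_constantCoeff_apply,
          hP0, hC0, sub_self]
        exact zero_mem _
      · have hksum : (k : R) * coeff k ((↑(∏ j ∈ range N, W j) : PowerSeries R) - C)
            = ∑ mm ∈ Icc 1 k,
              (coeff mm TN * coeff (k - mm) ((↑(∏ j ∈ range N, W j) : PowerSeries R) - C)
                + (coeff mm TN - coeff mm TC) * coeff (k - mm) C) := by
          rw [map_sub, mul_sub, hPk k hk, hCk k hk, ← Finset.sum_sub_distrib]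
          refine Finset.sum_congr rfl fun mm _ => ?_
          rw [map_sub]
          ring
        have hmem : (k : R) * coeff k ((↑(∏ j ∈ range N, W j) : PowerSeries R) - C)
            ∈ I ^ N := by
          rw [hksum]
          refine Ideal.sum_mem _ fun mm hmm => ?_
          rw [Finset.mem_Icc] at hmm
          exact add_mem (Ideal.mul_mem_left _ _ (ih (k - mm) (by omega)))
            (Ideal.mul_mem_right _ _ (hdiff mm hmm.1))
        have hid : coeff k ((↑(∏ j ∈ range N, W j) : PowerSeries R) - C)
            = algebraMap ℚ R ((k : ℚ)⁻¹)
              * ((k : R) * coeff k ((↑(∏ j ∈ range N, W j) : PowerSeries R) - C)) := by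
          rw [← mul_assoc, ← map_natCast (algebraMap ℚ R) k, ← map_mul,
            inv_mul_cancel₀ (Nat.cast_ne_zero.mpr hk.ne' : (k : ℚ) ≠ 0), map_one, one_mul]
        rw [hid]
        exact Ideal.mul_mem_left _ _ hmem
  intro d m
  exact ⟨m, fun N hN => Ideal.pow_le_pow_right hN (key N d)⟩
end

section
/- The Artin–Hasse exponential series E(t) = exp(∑_{i≥0} t^{p^i}/p^i) has all of its coefficients in ℤ_p; that is, E(t) ∈ 1 + t ℤ_p[[t]]. -/
open Finset

namespace ArtinHasseAux

open PowerSeries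

variable {p : ℕ} [hp : Fact p.Prime]

/-- Indicator power series of the `p`-th powers `1, p, p², …`. -/
noncomputable def S (p : ℕ) [Fact p.Prime] : ℚ_[p]⟦X⟧ :=
  PowerSeries.mk fun k => if k ∈ (range (k + 1)).image (p ^ ·) then (1 : ℚ_[p]) else 0

/-- `p` times the indicator power series of `p, p², …`. -/
noncomputable def Sp (p : ℕ) [Fact p.Prime] : ℚ_[p]⟦X⟧ :=
  PowerSeries.mk fun k =>
    if k ∈ ((range (k + 1)).filter (1 ≤ ·)).image (p ^ ·) then (p : ℚ_[p]) else 0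

variable (p) in
noncomputable def F (lam : ℕ → ℚ_[p]) : ℚ_[p]⟦X⟧ := PowerSeries.mk lam

variable (p) in
noncomputable def Fp (lam : ℕ → ℚ_[p]) : ℚ_[p]⟦X⟧ :=
  PowerSeries.mk fun k => if p ∣ k then lam (k / p) else 0

noncomputable def Ep (p : ℕ) [Fact p.Prime] : ℚ_[p]⟦X⟧ :=
  PowerSeries.mk fun j => (p : ℚ_[p]) ^ j / (j.factorial : ℚ_[p])

lemma self_lt_pow (i : ℕ) : i < p ^ i := Nat.lt_pow_self (n := i) hp.out.one_lt

lemma sum_pp (n : ℕ) (f : ℕ → ℚ_[p]) :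
    ∑ i ∈ (range (n + 1)).filter (fun i => p ^ i ≤ n), f (p ^ i)
      = ∑ k ∈ (range (n + 1)).filter (fun k => k ∈ (range (k + 1)).image (p ^ ·)), f k := by
  refine Finset.sum_bij (fun i _ => p ^ i) ?_ ?_ ?_ ?_
  · intro a ha
    simp only [mem_filter, mem_range] at ha
    refine mem_filter.mpr ⟨mem_range.mpr (Nat.lt_succ_of_le ha.2), ?_⟩
    exact Finset.mem_image.mpr ⟨a, mem_range.mpr (Nat.lt_succ_of_le (self_lt_pow a).le), rfl⟩
  · intro a _ b _ hab
    exact Nat.pow_right_injective hp.out.two_le hab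
  · intro k hk
    simp only [mem_filter, mem_range] at hk
    obtain ⟨hk1, hk2⟩ := hk
    obtain ⟨i, _, rfl⟩ := Finset.mem_image.mp hk2
    refine ⟨i, ?_, rfl⟩
    simp only [mem_filter, mem_range]
    exact ⟨Nat.lt_succ_of_le (le_trans (self_lt_pow i).le (Nat.lt_succ_iff.mp hk1)),
      Nat.lt_succ_iff.mp hk1⟩
  · intro a _; rfl

lemma sum_pp' (n : ℕ) (f : ℕ → ℚ_[p]) :
    ∑ i ∈ (range (n + 1)).filter (fun i => 1 ≤ i ∧ p ^ i ≤ n), f (p ^ i)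
      = ∑ k ∈ (range (n + 1)).filter
          (fun k => k ∈ ((range (k + 1)).filter (1 ≤ ·)).image (p ^ ·)), f k := by
  refine Finset.sum_bij (fun i _ => p ^ i) ?_ ?_ ?_ ?_
  · intro a ha
    simp only [mem_filter, mem_range] at ha
    refine mem_filter.mpr ⟨mem_range.mpr (Nat.lt_succ_of_le ha.2.2), ?_⟩
    refine Finset.mem_image.mpr ⟨a, ?_, rfl⟩
    exact mem_filter.mpr ⟨mem_range.mpr (Nat.lt_succ_of_le (self_lt_pow a).le), ha.2.1⟩
  · intro a _ b _ hab
    exact Nat.pow_right_injective hp.out.two_le hab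
  · intro k hk
    simp only [mem_filter, mem_range] at hk
    obtain ⟨hk1, hk2⟩ := hk
    obtain ⟨i, hi, rfl⟩ := Finset.mem_image.mp hk2
    have hi1 : 1 ≤ i := (mem_filter.mp hi).2
    refine ⟨i, ?_, rfl⟩
    simp only [mem_filter, mem_range]
    exact ⟨Nat.lt_succ_of_le (le_trans (self_lt_pow i).le (Nat.lt_succ_iff.mp hk1)), hi1,
      Nat.lt_succ_iff.mp hk1⟩
  · intro a _; rfl

lemma coeff_mul_S (G : ℚ_[p]⟦X⟧) (n : ℕ) :
    coeff n (G * S p)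
      = ∑ i ∈ range (n + 1), if p ^ i ≤ n then coeff (n - p ^ i) G else 0 := by
  rw [mul_comm, coeff_mul, Finset.Nat.sum_antidiagonal_eq_sum_range_succ_mk]
  simp only [S, coeff_mk, ite_mul, one_mul, zero_mul]
  rw [← Finset.sum_filter, ← Finset.sum_filter]
  exact (sum_pp n fun k => coeff (n - k) G).symm

lemma coeff_mul_Sp (G : ℚ_[p]⟦X⟧) (n : ℕ) :
    coeff n (G * Sp p)
      = ∑ i ∈ range (n + 1),
          if 1 ≤ i ∧ p ^ i ≤ n then (p : ℚ_[p]) * coeff (n - p ^ i) G else 0 := by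
  rw [mul_comm, coeff_mul, Finset.Nat.sum_antidiagonal_eq_sum_range_succ_mk]
  simp only [Sp, coeff_mk, ite_mul, zero_mul]
  rw [← Finset.sum_filter, ← Finset.sum_filter]
  exact (sum_pp' n fun k => (p : ℚ_[p]) * coeff (n - k) G).symm


/-- `T` is the "logarithmic derivative numerator" of `G`: `X·G' = G·T` coefficientwise. -/
def IsLog (G T : ℚ_[p]⟦X⟧) : Prop :=
  ∀ n : ℕ, (n : ℚ_[p]) * coeff n G = coeff n (G * T)

lemma IsLog.mul {G H T₁ T₂ : ℚ_[p]⟦X⟧} (hG : IsLog G T₁) (hH : IsLog H T₂) :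
    IsLog (G * H) (T₁ + T₂) := by
  intro n
  have expand : G * H * (T₁ + T₂) = G * T₁ * H + G * (H * T₂) := by ring
  rw [expand, map_add, coeff_mul, coeff_mul, coeff_mul, Finset.mul_sum,
    ← Finset.sum_add_distrib]
  refine Finset.sum_congr rfl fun x hx => ?_
  have hx' : x.1 + x.2 = n := Finset.HasAntidiagonal.mem_antidiagonal.mp hx
  have hcast : (n : ℚ_[p]) = (x.1 : ℚ_[p]) + (x.2 : ℚ_[p]) := by exact_mod_cast hx'.symm
  rw [← hG x.1, ← hH x.2, hcast]; ring

lemma IsLog.pow {G T : ℚ_[p]⟦X⟧} (hG : IsLog G T) : ∀ k : ℕ, IsLog (G ^ k) (k • T)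
  | 0 => by
      intro n
      rw [pow_zero, zero_smul, mul_zero, map_zero, coeff_one]
      split
      · next h => subst h; simp
      · simp
  | (k + 1) => by
      have h := (IsLog.pow hG k).mul hG
      rw [← pow_succ] at h
      rwa [succ_nsmul]

lemma IsLog.unique {G H T : ℚ_[p]⟦X⟧} (hT : constantCoeff T = 0)
    (hG : IsLog G T) (hH : IsLog H T)
    (h00 : coeff 0 G = coeff 0 H) : G = H := by
  have hco : ∀ n, coeff n G = coeff n H := by
    intro n
    induction n using Nat.strong_induction_on with
    | _ n IH =>
      cases n with
      | zero => exact h00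
      | succ m =>
        have key : coeff (m + 1) (G * T) = coeff (m + 1) (H * T) := by
          rw [coeff_mul, coeff_mul]
          refine Finset.sum_congr rfl fun x hx => ?_
          have hx' : x.1 + x.2 = m + 1 := Finset.HasAntidiagonal.mem_antidiagonal.mp hx
          rcases Nat.eq_zero_or_pos x.2 with h2 | h2
          · have : coeff x.2 T = 0 := by
              rw [h2, coeff_zero_eq_constantCoeff, hT]
            rw [this, mul_zero, mul_zero]
          · have hlt : x.1 < m + 1 := by omega
            rw [IH x.1 hlt]
        have h1 := hG (m + 1)
        have h2 := hH (m + 1)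
        rw [key] at h1
        have h3 := h1.trans h2.symm
        exact mul_left_cancel₀ (by exact_mod_cast Nat.succ_ne_zero m) h3
  ext n
  exact hco n

section Real
variable (lam : ℕ → ℚ_[p])
  (hrec : ∀ n : ℕ, 1 ≤ n →
      (n : ℚ_[p]) * lam n =
        ∑ i ∈ range (n + 1), if p ^ i ≤ n then lam (n - p ^ i) else 0)

include hrec in
lemma isLog_F : IsLog (F p lam) (S p) := by
  intro n
  rw [coeff_mul_S]
  cases n with
  | zero =>
      rw [Nat.cast_zero, zero_mul]
      symm
      refine Finset.sum_eq_zero fun i _ => ?_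
      rw [if_neg]
      exact fun h => absurd (Nat.le_zero.mp h) (pow_pos hp.out.pos i).ne'
  | succ m =>
      rw [F, coeff_mk, hrec (m + 1) (Nat.succ_le_succ (Nat.zero_le m))]
      refine Finset.sum_congr rfl fun i _ => ?_
      split
      · rw [coeff_mk]
      · rfl

include hrec in
lemma isLog_Fp : IsLog (Fp p lam) (Sp p) := by
  intro n
  rw [coeff_mul_Sp]
  by_cases hd : p ∣ n
  · obtain ⟨m, rfl⟩ := hd
    cases m with
    | zero =>
        simp only [Nat.mul_zero, Nat.cast_zero, zero_mul]
        symm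
        refine Finset.sum_eq_zero fun i hi => ?_
        rw [if_neg]
        rintro ⟨h1, h2⟩
        exact absurd (Nat.le_zero.mp h2) (pow_pos hp.out.pos i).ne'
    | succ m' =>
        set m := m' + 1 with hm
        have hm1 : 1 ≤ m := Nat.succ_le_succ (Nat.zero_le m')
        have hLHS : coeff (p * m) (Fp p lam) = lam m := by
          rw [Fp, coeff_mk, if_pos (Dvd.intro m rfl), Nat.mul_div_cancel_left m hp.out.pos]
        rw [hLHS]
        have hterm : ∀ i ∈ range (p * m + 1),
            (if 1 ≤ i ∧ p ^ i ≤ p * m then (p : ℚ_[p]) * coeff (p * m - p ^ i) (Fp p lam) else 0)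
            = (if 1 ≤ i ∧ p ^ i ≤ p * m then (p : ℚ_[p]) * lam (m - p ^ (i - 1)) else 0) := by
          intro i _
          split
          · next h =>
            obtain ⟨h1, h2⟩ := h
            obtain ⟨j, rfl⟩ : ∃ j, i = j + 1 := ⟨i - 1, by omega⟩
            have hj : j + 1 - 1 = j := by omega
            have hsub : p * m - p ^ (j + 1) = p * (m - p ^ j) := by
              rw [pow_succ', Nat.mul_sub]
            rw [hsub, Fp, coeff_mk, if_pos ⟨m - p ^ j, rfl⟩,
              Nat.mul_div_cancel_left _ hp.out.pos, hj]
          · rfl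
        rw [Finset.sum_congr rfl hterm]
        have hre : ∑ i ∈ range (p * m + 1),
            (if 1 ≤ i ∧ p ^ i ≤ p * m then (p : ℚ_[p]) * lam (m - p ^ (i - 1)) else 0)
            = ∑ j ∈ range (m + 1), (if p ^ j ≤ m then (p : ℚ_[p]) * lam (m - p ^ j) else 0) := by
          rw [← Finset.sum_filter, ← Finset.sum_filter]
          refine (Finset.sum_bij (fun j _ => j + 1) ?_ ?_ ?_ ?_).symm
          · intro a ha
            simp only [mem_filter, mem_range] at ha ⊢
            have hpa : p ^ (a + 1) ≤ p * m := by
              rw [pow_succ']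
              exact Nat.mul_le_mul_left p ha.2
            refine ⟨?_, Nat.le_add_left 1 a, hpa⟩
            have := self_lt_pow (p := p) (a + 1)
            omega
          · intro a _ b _ h
            exact Nat.succ_injective h
          · intro i hi
            simp only [mem_filter, mem_range] at hi
            obtain ⟨hi0, hi1, hi2⟩ := hi
            obtain ⟨j, rfl⟩ : ∃ j, i = j + 1 := ⟨i - 1, by omega⟩
            refine ⟨j, ?_, rfl⟩
            simp only [mem_filter, mem_range]
            have hj : p ^ j ≤ m := by
              have h' : p * p ^ j ≤ p * m := by rw [← pow_succ']; exact hi2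
              exact Nat.le_of_mul_le_mul_left h' hp.out.pos
            refine ⟨?_, hj⟩
            have := self_lt_pow (p := p) j
            omega
          · intro a _
            simp
        rw [hre]
        have hfac : ∀ j ∈ range (m + 1),
            (if p ^ j ≤ m then (p : ℚ_[p]) * lam (m - p ^ j) else 0)
            = (p : ℚ_[p]) * (if p ^ j ≤ m then lam (m - p ^ j) else 0) := by
          intro j _; split <;> simp
        rw [Finset.sum_congr rfl hfac, ← Finset.mul_sum, ← hrec m hm1]
        push_cast
        ring
  · have hLHS : coeff n (Fp p lam) = 0 := by rw [Fp, coeff_mk, if_neg hd]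
    rw [hLHS, mul_zero]
    symm
    refine Finset.sum_eq_zero fun i hi => ?_
    split
    · next h =>
      obtain ⟨h1, h2⟩ := h
      have hnd : ¬ p ∣ (n - p ^ i) := by
        intro hdvd
        apply hd
        have hpp : p ∣ p ^ i := dvd_pow_self p (by omega)
        have h3 := Nat.dvd_add hdvd hpp
        rwa [Nat.sub_add_cancel h2] at h3
      rw [Fp, coeff_mk, if_neg hnd, mul_zero]
    · rfl

lemma isLog_Ep : IsLog (Ep p) (C (p : ℚ_[p]) * X) := by
  intro n
  have harr : Ep p * (C (p : ℚ_[p]) * X) = Ep p * C (p : ℚ_[p]) * X := by ring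
  cases n with
  | zero =>
      simp [harr, coeff_zero_eq_constantCoeff, map_mul, constantCoeff_X]
  | succ m =>
      rw [harr, coeff_succ_mul_X, coeff_mul_C, Ep, coeff_mk, coeff_mk, Nat.factorial_succ]
      have h1 : ((m.factorial : ℚ_[p])) ≠ 0 := by
        exact_mod_cast m.factorial_ne_zero
      have h2 : ((m : ℚ_[p]) + 1) ≠ 0 := by
        exact_mod_cast Nat.succ_ne_zero m
      push_cast
      rw [pow_succ]
      field_simp

lemma Sp_add_eq : Sp p + C (p : ℚ_[p]) * X = (p : ℕ) • S p := by
  ext k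
  rw [map_add, coeff_C_mul, coeff_X]
  have hsmul : coeff k ((p : ℕ) • S p) = (p : ℚ_[p]) * coeff k (S p) := by
    rw [map_nsmul, nsmul_eq_mul]
  rw [hsmul]
  rcases k with _ | k
  · have hS0 : (0:ℕ) ∉ (range (0 + 1)).image (p ^ ·) := by
      simp only [Finset.mem_image, mem_range]
      rintro ⟨i, -, hi⟩
      exact (pow_pos hp.out.pos i).ne' hi
    have hSp0 : (0:ℕ) ∉ ((range (0 + 1)).filter (1 ≤ ·)).image (p ^ ·) := by
      simp only [Finset.mem_image, mem_filter, mem_range]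
      rintro ⟨i, -, hi⟩
      exact (pow_pos hp.out.pos i).ne' hi
    simp only [Sp, S, coeff_mk, if_neg hS0, if_neg hSp0]
    simp
  · rcases k with _ | k
    · have hS1 : (1:ℕ) ∈ (range (1 + 1)).image (p ^ ·) :=
        Finset.mem_image.mpr ⟨0, by simp, by simp⟩
      have hSp1 : (1:ℕ) ∉ ((range (1 + 1)).filter (1 ≤ ·)).image (p ^ ·) := by
        simp only [Finset.mem_image, mem_filter, mem_range]
        rintro ⟨i, ⟨-, hi1⟩, hpi⟩
        have h2 : p ≤ p ^ i := Nat.le_self_pow (by omega) p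
        have h3 := hp.out.two_le
        omega
      simp only [Sp, S, coeff_mk, if_neg hSp1, if_pos hS1, if_pos rfl]
      simp
    · have hx : k + 1 + 1 ≠ 1 := by omega
      rw [if_neg hx, mul_zero, add_zero]
      simp only [Sp, S, coeff_mk]
      by_cases hpp : (k + 1 + 1) ∈ (range (k + 1 + 1 + 1)).image (p ^ ·)
      · obtain ⟨i, hir, hpi⟩ := Finset.mem_image.mp hpp
        have hi1 : 1 ≤ i := by
          rcases Nat.eq_zero_or_pos i with rfl | h
          · rw [pow_zero] at hpi; omega
          · exact h
        have hmem : (k + 1 + 1) ∈ ((range (k + 1 + 1 + 1)).filter (1 ≤ ·)).image (p ^ ·) :=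
          Finset.mem_image.mpr ⟨i, mem_filter.mpr ⟨hir, hi1⟩, hpi⟩
        rw [if_pos hpp, if_pos hmem, mul_one]
      · have hmem : (k + 1 + 1) ∉ ((range (k + 1 + 1 + 1)).filter (1 ≤ ·)).image (p ^ ·) := by
          intro hmem
          obtain ⟨i, hi, hpi⟩ := Finset.mem_image.mp hmem
          exact hpp (Finset.mem_image.mpr ⟨i, (mem_filter.mp hi).1, hpi⟩)
        rw [if_neg hpp, if_neg hmem, mul_zero]

end Real

section Main
variable (lam : ℕ → ℚ_[p])
  (hrec : ∀ n : ℕ, 1 ≤ n →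
      (n : ℚ_[p]) * lam n =
        ∑ i ∈ range (n + 1), if p ^ i ≤ n then lam (n - p ^ i) else 0)

include hrec in
lemma key_identity (h0 : lam 0 = 1) : F p lam ^ p = Fp p lam * Ep p := by
  have hS0 : constantCoeff (S p) = 0 := by
    rw [S, constantCoeff_mk, if_neg]
    simp only [Finset.mem_image, mem_range]
    rintro ⟨i, -, hi⟩
    exact (pow_pos hp.out.pos i).ne' hi
  have hT0 : constantCoeff ((p : ℕ) • S p) = 0 := by
    rw [map_nsmul, hS0, smul_zero]
  have hA : IsLog (F p lam ^ p) ((p : ℕ) • S p) := (isLog_F lam hrec).pow p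
  have hB : IsLog (Fp p lam * Ep p) ((p : ℕ) • S p) := by
    rw [← Sp_add_eq]
    exact (isLog_Fp lam hrec).mul isLog_Ep
  refine IsLog.unique hT0 hA hB ?_
  rw [coeff_zero_eq_constantCoeff_apply, coeff_zero_eq_constantCoeff_apply, map_pow, map_mul]
  rw [F, Fp, Ep, constantCoeff_mk, constantCoeff_mk, constantCoeff_mk, h0]
  rw [if_pos (dvd_zero p), Nat.zero_div, h0]
  simp

lemma norm_fin_sum_le {α : Type*} {s : Finset α} {f : α → ℚ_[p]} {C : ℝ} (hC : 0 ≤ C)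
    (h : ∀ x ∈ s, ‖f x‖ ≤ C) : ‖∑ x ∈ s, f x‖ ≤ C := by
  classical
  induction s using Finset.induction_on with
  | empty => simpa using hC
  | @insert a s ha IH =>
      rw [Finset.sum_insert ha]
      refine (Padic.nonarchimedean _ _).trans
        (max_le (h _ (mem_insert_self _ _)) (IH fun x hx => h x (mem_insert_of_mem hx)))

lemma padicValNat_factorial_succ_le {b : ℕ} (hb : 1 ≤ b) :
    padicValNat p b.factorial + 1 ≤ b := by
  have hne : p.digits b ≠ [] := Nat.digits_ne_nil_iff_ne_zero.mpr (by omega)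
  have hlast := Nat.getLast_digit_ne_zero p (show b ≠ 0 by omega)
  have hmem := List.getLast_mem hne
  have hds : 1 ≤ (p.digits b).sum :=
    le_trans (Nat.one_le_iff_ne_zero.mpr hlast)
      (List.single_le_sum (fun x _ => Nat.zero_le x) _ hmem)
  have h1 := sub_one_mul_padicValNat_factorial (p := p) b
  have h2 : padicValNat p b.factorial ≤ (p - 1) * padicValNat p b.factorial :=
    Nat.le_mul_of_pos_left _ (by have := hp.out.two_le; omega)
  have h3 := Nat.digit_sum_le p b
  omega

lemma norm_Ep_term {b : ℕ} (hb : 1 ≤ b) :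
    ‖(p : ℚ_[p]) ^ b / (b.factorial : ℚ_[p])‖ ≤ (p : ℝ)⁻¹ := by
  have hf0 : (b.factorial : ℚ_[p]) ≠ 0 := by exact_mod_cast b.factorial_ne_zero
  have hv := padicValNat_factorial_succ_le (p := p) hb
  rw [norm_div, Padic.norm_p_pow, Padic.norm_eq_zpow_neg_valuation hf0, Padic.valuation_natCast,
    ← zpow_sub₀ (by exact_mod_cast hp.out.pos.ne' : (p : ℝ) ≠ 0)]
  have hp1 : (1 : ℝ) < p := by exact_mod_cast hp.out.one_lt
  have hle : (-(b : ℤ)) - (-(padicValNat p b.factorial : ℤ)) ≤ -1 := by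
    have : (padicValNat p b.factorial : ℤ) + 1 ≤ (b : ℤ) := by exact_mod_cast hv
    omega
  calc (p : ℝ) ^ ((-(b : ℤ)) - (-(padicValNat p b.factorial : ℤ)))
      ≤ (p : ℝ) ^ (-1 : ℤ) := zpow_le_zpow_right₀ hp1.le hle
    _ = (p : ℝ)⁻¹ := by norm_num

lemma coeff_pow_split (h0 : lam 0 = 1) {n : ℕ} (hn : 1 ≤ n) :
    coeff n (F p lam ^ p)
      = coeff n ((PowerSeries.mk fun m => if m < n then lam m else 0 : ℚ_[p]⟦X⟧) ^ p)
        + (p : ℚ_[p]) * lam n := by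
  set g : ℚ_[p]⟦X⟧ := PowerSeries.mk fun m => if m < n then lam m else 0 with hg
  set H : ℚ_[p]⟦X⟧ := F p lam - g with hH
  have hFgH : F p lam = g + H := by rw [hH]; ring
  have hHc : ∀ j, j < n → coeff j H = 0 := by
    intro j hj
    rw [hH, map_sub, F, coeff_mk, hg, coeff_mk, if_pos hj, sub_self]
  have hdvd : (X : ℚ_[p]⟦X⟧) ^ n ∣ H := X_pow_dvd_iff.mpr hHc
  have hHn : coeff n H = lam n := by
    rw [hH, map_sub, F, coeff_mk, hg, coeff_mk, if_neg (lt_irrefl n), sub_zero]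
  have hp2 := hp.out.two_le
  rw [hFgH, add_pow, map_sum]
  have hsub : ({p - 1, p} : Finset ℕ) ⊆ range (p + 1) := by
    intro x hx
    simp only [Finset.mem_insert, Finset.mem_singleton] at hx
    rcases hx with rfl | rfl <;> simp [mem_range] <;> omega
  rw [← Finset.sum_subset hsub (fun k hk hk2 => ?_)]
  · have hne : p - 1 ≠ p := by omega
    rw [Finset.sum_pair hne]
    have hpp : p - (p - 1) = 1 := by omega
    have ht2 : g ^ p * H ^ (p - p) * ((p.choose p : ℕ) : ℚ_[p]⟦X⟧) = g ^ p := by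
      rw [Nat.sub_self, pow_zero, Nat.choose_self]
      push_cast
      ring
    have hch : p.choose (p - 1) = p := by
      have h1 : p.choose (p - 1) = p.choose 1 := by
        conv_lhs => rw [show p - 1 = p - 1 from rfl]
        rw [← Nat.choose_symm (show 1 ≤ p by omega)]
      rw [h1, Nat.choose_one_right]
    have hcast : ((p.choose (p - 1) : ℕ) : ℚ_[p]⟦X⟧) = C ((p : ℚ_[p])) := by
      rw [hch]
      exact (map_natCast (C (R := ℚ_[p])) p).symm
    have hmain : coeff n (g ^ (p - 1) * H) = lam n := by
      rw [coeff_mul, Finset.sum_eq_single ((0 : ℕ), n)]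
      · have hg0 : coeff 0 (g ^ (p - 1)) = 1 := by
          rw [coeff_zero_eq_constantCoeff, map_pow, hg, constantCoeff_mk, if_pos (by omega), h0,
            one_pow]
        rw [hg0, hHn, one_mul]
      · intro b hb hbne
        have hb' : b.1 + b.2 = n := mem_antidiagonal.mp hb
        have hblt : b.2 < n := by
          rcases Nat.lt_or_ge b.2 n with h | h
          · exact h
          · exfalso
            apply hbne
            have h2 : b.2 = n := by omega
            have h1 : b.1 = 0 := by omega
            exact Prod.ext h1 h2
        rw [hHc b.2 hblt, mul_zero]
      · intro hnm
        exact absurd (Finset.HasAntidiagonal.mem_antidiagonal.mpr (by simp)) hnm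
    have ht1 : coeff n (g ^ (p - 1) * H ^ (p - (p - 1)) * ((p.choose (p - 1) : ℕ) : ℚ_[p]⟦X⟧))
        = (p : ℚ_[p]) * lam n := by
      rw [hpp, pow_one, hcast, coeff_mul_C, hmain, mul_comm]
    rw [ht1, ht2]
    ring
  · -- vanishing terms
    simp only [Finset.mem_insert, Finset.mem_singleton, not_or] at hk2
    have hk3 : k + 2 ≤ p := by
      simp only [mem_range] at hk
      omega
    have hdvd2 : (X : ℚ_[p]⟦X⟧) ^ (n * (p - k)) ∣ g ^ k * H ^ (p - k) * ((p.choose k : ℕ) : ℚ_[p]⟦X⟧) := by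
      have h1 : ((X : ℚ_[p]⟦X⟧) ^ n) ^ (p - k) ∣ H ^ (p - k) := pow_dvd_pow_of_dvd hdvd _
      rw [← pow_mul] at h1
      exact Dvd.dvd.mul_right (Dvd.dvd.mul_left h1 _) _
    refine (X_pow_dvd_iff.mp hdvd2) n ?_
    have h5 : 2 ≤ p - k := by omega
    have h4 : n * 2 ≤ n * (p - k) := Nat.mul_le_mul_left n h5
    omega

end Main


lemma coeff_pow_int {n : ℕ} (hn : 1 ≤ n) (b : ℕ → ℤ_[p]) (hbz : ∀ m, n ≤ m → b m = 0) :
    ‖coeff n ((PowerSeries.mk b) ^ p) - (if p ∣ n then b (n / p) else 0)‖ ≤ (p : ℝ)⁻¹ := by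
  haveI : CharP ((ZMod p)⟦X⟧) p := charP_of_injective_ringHom (C_injective (R := ZMod p)) p
  set c : ℕ → ZMod p := fun m => PadicInt.toZMod (b m) with hc
  have hmap : PowerSeries.map (PadicInt.toZMod) (PowerSeries.mk b)
      = ∑ m ∈ range n, (monomial m) (c m) := by
    ext j
    rw [coeff_map, coeff_mk, map_sum]
    rw [Finset.sum_congr rfl (fun m _ => coeff_monomial j m (c m))]
    rw [Finset.sum_ite_eq (range n) j c]
    split
    · rfl
    · next h => rw [hbz j (by simpa [mem_range, not_lt] using h), map_zero]
  have hfrob : PowerSeries.map (PadicInt.toZMod) ((PowerSeries.mk b) ^ p)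
      = ∑ m ∈ range n, (monomial (m * p)) (c m) := by
    rw [map_pow, hmap, sum_pow_char]
    refine Finset.sum_congr rfl fun m _ => ?_
    have h1 : (monomial m (c m)) = C (c m) * X ^ m := by
      ext j
      rw [coeff_monomial, coeff_C_mul_X_pow]
    have h2 : (monomial (m * p) (c m)) = C (c m) * X ^ (m * p) := by
      ext j
      rw [coeff_monomial, coeff_C_mul_X_pow]
    rw [h1, h2, mul_pow, ← map_pow, ← pow_mul, ZMod.pow_card]
  have hco : PadicInt.toZMod (coeff n ((PowerSeries.mk b) ^ p))
      = PadicInt.toZMod (if p ∣ n then b (n / p) else 0) := by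
    rw [← coeff_map, hfrob, map_sum,
      Finset.sum_congr rfl fun m _ => coeff_monomial n (m * p) (c m)]
    by_cases hd : p ∣ n
    · obtain ⟨m0, hm0⟩ := hd
      have hm00 : m0 ≠ 0 := by rintro rfl; omega
      have hm0lt : m0 < n := by
        have h2 := hp.out.two_le
        calc m0 < 2 * m0 := by omega
        _ ≤ p * m0 := Nat.mul_le_mul_right m0 h2
        _ = n := hm0.symm
      rw [Finset.sum_eq_single m0]
      · rw [if_pos (by rw [hm0, mul_comm] : n = m0 * p), if_pos ⟨m0, hm0⟩]
        have : n / p = m0 := by rw [hm0, Nat.mul_div_cancel_left m0 hp.out.pos]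
        rw [this]
      · intro m _ hne
        rw [if_neg]
        intro h
        apply hne
        exact Nat.eq_of_mul_eq_mul_right hp.out.pos (by rw [← h, hm0, mul_comm])
      · intro habs
        exact absurd (mem_range.mpr hm0lt) habs
    · rw [if_neg hd, map_zero]
      refine Finset.sum_eq_zero fun m _ => if_neg fun h => hd ⟨m, by rw [h, mul_comm]⟩
  have hker : coeff n ((PowerSeries.mk b) ^ p) - (if p ∣ n then b (n / p) else 0)
      ∈ RingHom.ker (PadicInt.toZMod (p := p)) := by
    rw [RingHom.mem_ker, map_sub, hco, sub_self]
  rw [PadicInt.ker_toZMod, PadicInt.maximalIdeal_eq_span_p, Ideal.mem_span_singleton] at hker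
  obtain ⟨y, hy⟩ := hker
  rw [hy, norm_mul, PadicInt.norm_p]
  calc (p : ℝ)⁻¹ * ‖y‖ ≤ (p : ℝ)⁻¹ * 1 := by
        exact mul_le_mul_of_nonneg_left (PadicInt.norm_le_one y) (by positivity)
    _ = (p : ℝ)⁻¹ := mul_one _


end ArtinHasseAux

open ArtinHasseAux PowerSeries

/-- The Artin–Hasse exponential `E(t) = exp(∑_{i≥0} t^{p^i}/p^i) = ∑ λ_n t^n`
over `ℚ_p`, encoded by `λ 0 = 1` together with the recurrence
`n·λ_n = ∑_{i : p^i ≤ n} λ_{n - p^i}` obtained by logarithmic differentiation,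
has all its coefficients in `ℤ_p`: `E(t) ∈ 1 + t ℤ_p[[t]]`. -/

theorem artin_hasse_coeff_integral (p : ℕ) [Fact p.Prime] (lam : ℕ → ℚ_[p])
    (h0 : lam 0 = 1)
    (hrec : ∀ n : ℕ, 1 ≤ n →
      (n : ℚ_[p]) * lam n =
        ∑ i ∈ range (n + 1), if p ^ i ≤ n then lam (n - p ^ i) else 0) :
    ∀ n : ℕ, ‖lam n‖ ≤ 1 := by
  have hfact : Fact p.Prime := inferInstance
  intro n
  induction n using Nat.strong_induction_on with
  | _ n IH =>
    rcases Nat.eq_zero_or_pos n with rfl | hn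
    · rw [h0]; simp
    · set δ : ℚ_[p] := if p ∣ n then lam (n / p) else 0 with hδ
      set b : ℕ → ℤ_[p] := fun m => if h : m < n then ⟨lam m, IH m h⟩ else 0 with hb
      have hbz : ∀ m, n ≤ m → b m = 0 := fun m hm => dif_neg (by omega)
      have hgmap : PowerSeries.map (PadicInt.Coe.ringHom (p := p)) (PowerSeries.mk b)
          = (PowerSeries.mk fun m => if m < n then lam m else 0 : ℚ_[p]⟦X⟧) := by
        ext j
        rw [coeff_map, coeff_mk, coeff_mk, hb]
        by_cases hj : j < n
        · simp only
          rw [if_pos hj]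
          exact congrArg PadicInt.Coe.ringHom (dif_pos hj)
        · simp only
          rw [if_neg hj]
          exact (congrArg PadicInt.Coe.ringHom (dif_neg hj)).trans (map_zero _)
      have hgpow : coeff n ((PowerSeries.mk fun m => if m < n then lam m else 0 : ℚ_[p]⟦X⟧) ^ p)
          = ((coeff n ((PowerSeries.mk b) ^ p) : ℤ_[p]) : ℚ_[p]) := by
        rw [← hgmap, ← map_pow, coeff_map]
        rfl
      have hδcast : δ = (((if p ∣ n then b (n / p) else 0) : ℤ_[p]) : ℚ_[p]) := by
        rw [hδ, hb]
        by_cases hd : p ∣ n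
        · rw [if_pos hd, if_pos hd]
          have hlt : n / p < n := Nat.div_lt_self hn hfact.out.one_lt
          simp only
          exact (congrArg (fun z : ℤ_[p] => (z : ℚ_[p]))
            (dif_pos hlt (α := ℤ_[p]) (t := fun h => ⟨lam (n / p), IH _ h⟩) (e := fun _ => (0 : ℤ_[p])))).symm
        · rw [if_neg hd, if_neg hd]
          simp
      have hA : ‖coeff n ((PowerSeries.mk fun m => if m < n then lam m else 0 : ℚ_[p]⟦X⟧) ^ p) - δ‖
          ≤ (p : ℝ)⁻¹ := by
        rw [hgpow, hδcast, ← PadicInt.coe_sub, ← PadicInt.norm_def]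
        exact coeff_pow_int hn b hbz
      have hB : ‖coeff n (Fp p lam * Ep p) - δ‖ ≤ (p : ℝ)⁻¹ := by
        rw [coeff_mul]
        have hmem : ((n, 0) : ℕ × ℕ) ∈ antidiagonal n := by simp
        rw [← Finset.add_sum_erase _ _ hmem]
        have hterm : coeff (n, 0).1 (Fp p lam) * coeff (n, 0).2 (Ep p) = δ := by
          simp only [Fp, Ep, coeff_mk, pow_zero, Nat.factorial_zero, Nat.cast_one, div_one,
            mul_one]
          exact hδ.symm
        rw [hterm, add_sub_cancel_left]
        refine norm_fin_sum_le (by positivity) ?_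
        intro x hx
        obtain ⟨hxne, hxmem⟩ := Finset.mem_erase.mp hx
        have hxsum : x.1 + x.2 = n := mem_antidiagonal.mp hxmem
        have hx2 : 1 ≤ x.2 := by
          rcases Nat.eq_zero_or_pos x.2 with h | h
          · exfalso
            apply hxne
            have h1 : x.1 = n := by omega
            exact Prod.ext h1 h
          · exact h
        have hFp : ‖coeff x.1 (Fp p lam)‖ ≤ 1 := by
          rw [Fp, coeff_mk]
          split
          · exact IH _ (lt_of_le_of_lt (Nat.div_le_self _ _) (by omega))
          · simp
        have hEp : ‖coeff x.2 (Ep p)‖ ≤ (p : ℝ)⁻¹ := by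
          rw [Ep, coeff_mk]
          exact norm_Ep_term hx2
        calc ‖coeff x.1 (Fp p lam) * coeff x.2 (Ep p)‖
            = ‖coeff x.1 (Fp p lam)‖ * ‖coeff x.2 (Ep p)‖ := norm_mul _ _
          _ ≤ 1 * (p : ℝ)⁻¹ := mul_le_mul hFp hEp (norm_nonneg _) zero_le_one
          _ = (p : ℝ)⁻¹ := one_mul _
      have hkey := key_identity lam hrec h0
      have hsplit := coeff_pow_split lam h0 hn
      have heq : (p : ℚ_[p]) * lam n
          = (coeff n (Fp p lam * Ep p) - δ)
            - (coeff n ((PowerSeries.mk fun m => if m < n then lam m else 0 : ℚ_[p]⟦X⟧) ^ p) - δ) := by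
        rw [← hkey, hsplit]
        ring
      have hnorm : ‖(p : ℚ_[p]) * lam n‖ ≤ (p : ℝ)⁻¹ := by
        rw [heq, sub_eq_add_neg]
        refine (Padic.nonarchimedean _ _).trans (max_le hB ?_)
        rw [norm_neg]
        exact hA
      rw [norm_mul, Padic.norm_p] at hnorm
      have hppos : (0 : ℝ) < (p : ℝ)⁻¹ := by
        have := hfact.out.pos
        positivity
      have h1 : (p : ℝ)⁻¹ * ‖lam n‖ ≤ (p : ℝ)⁻¹ * 1 := by simpa using hnorm
      exact le_of_mul_le_mul_left h1 hppos
end
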